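/- Let (A, ≤) be a complete lattice and R a progression on A. Then the function f₀ : A → A defined by f₀(x) := ⨅{z_α | x ≤ z_α} is the unique largest R-monotone function: f₀ is R-monotone, and for every R-monotone function f : A → A and every x ∈ A, f(x) ≤ f₀(x). -/

import Mathlib

universe u

/-- A progression on a complete lattice `A` is a binary relation `R` with
`≤ ∘ R ∘ ≤ ⊆ R` and, for every `b`, `⨆ {a | a R b}` itself related to `b`. -/
def IsProgression {A : Type u} [CompleteLattice A] (R : A → A → Prop) : Prop :=
  (∀ a' a b b' : A, a' ≤ a → R a b → b ≤ b' → R a' b') ∧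
  (∀ b : A, R (sSup {a | R a b}) b)

/-- The transfinite stratification associated with a relation `R`:
`z_0 = ⊤`, `z_{α+1} = ⨆ {a | a R z_α}`, `z_λ = ⨅_{β<λ} z_β` for limits. -/
noncomputable def zStrat {A : Type u} [CompleteLattice A] (R : A → A → Prop)
    (α : Ordinal.{u}) : A :=
  Ordinal.limitRecOn α
    ⊤
    (fun _ ih => sSup {a | R a ih})
    (fun o _ ih => ⨅ (β : Ordinal.{u}) (h : β < o), ih β h)

/-- `f` is `R`-monotone: monotone with respect to `≤ ∩ R`. -/
def RMonotone {A : Type u} [CompleteLattice A] (R : A → A → Prop) (f : A → A) : Prop :=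
  ∀ a b : A, a ≤ b → R a b → f a ≤ f b ∧ R (f a) (f b)

/-- The candidate largest function: `x ↦ ⨅ {z_α | x ≤ z_α}`. -/
noncomputable def lrfLat {A : Type u} [CompleteLattice A] (R : A → A → Prop) (x : A) : A :=
  ⨅ (α : Ordinal.{u}) (_ : x ≤ zStrat R α), zStrat R α

section
variable {A : Type u} [CompleteLattice A] (R : A → A → Prop)

theorem zStrat_zero : zStrat R 0 = ⊤ :=
  Ordinal.limitRecOn_zero _ _ _

theorem zStrat_succ (α : Ordinal.{u}) :
    zStrat R (Order.succ α) = sSup {a | R a (zStrat R α)} :=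
  Ordinal.limitRecOn_succ _ _ _ _

theorem zStrat_limit {o : Ordinal.{u}} (ho : Order.IsSuccLimit o) :
    zStrat R o = ⨅ (β : Ordinal.{u}) (_ : β < o), zStrat R β :=
  Ordinal.limitRecOn_limit _ _ _ _ ho

theorem zStrat_succ_R (hR : IsProgression R) : ∀ α, R (zStrat R (Order.succ α)) (zStrat R α) := by
  intro α; rw [zStrat_succ]; exact hR.2 _

theorem sSup_R_mono (hR : IsProgression R) {b b' : A} (h : b ≤ b') :
    sSup {a | R a b} ≤ sSup {a | R a b'} :=
  sSup_le_sSup fun a ha => hR.1 a a b b' le_rfl ha h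

theorem zStrat_antitone (hR : IsProgression R) : Antitone (zStrat R) := by
  have key : ∀ β : Ordinal.{u}, ∀ α < β, zStrat R β ≤ zStrat R α := by
    intro β
    induction β using Ordinal.induction with
    | h β IH =>
    intro α hα
    rcases Ordinal.zero_or_succ_or_isSuccLimit β with rfl | ⟨γ, rfl⟩ | hlim
    · exact absurd hα (not_lt_of_ge (zero_le (a := α)))
    · have hsg : zStrat R (Order.succ γ) ≤ zStrat R γ := by
        rcases Ordinal.zero_or_succ_or_isSuccLimit γ with rfl | ⟨δ, rfl⟩ | hl
        · rw [zStrat_zero]; exact le_top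
        · rw [zStrat_succ]
          calc sSup {a | R a (zStrat R (Order.succ δ))}
              ≤ sSup {a | R a (zStrat R δ)} :=
                sSup_R_mono R hR (IH _ (Order.lt_succ _) δ (Order.lt_succ _))
            _ = zStrat R (Order.succ δ) := (zStrat_succ R δ).symm
        · rw [zStrat_limit R hl]
          refine le_iInf₂ fun δ hδ => ?_
          have h1 : zStrat R γ ≤ zStrat R δ := IH γ (Order.lt_succ _) δ hδ
          calc zStrat R (Order.succ γ)
              = sSup {a | R a (zStrat R γ)} := zStrat_succ R γ
            _ ≤ sSup {a | R a (zStrat R δ)} := sSup_R_mono R hR h1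
            _ = zStrat R (Order.succ δ) := (zStrat_succ R δ).symm
            _ ≤ zStrat R δ := IH _ (lt_trans (hl.succ_lt hδ) (Order.lt_succ _)) δ (Order.lt_succ _)
      rcases (Order.lt_succ_iff.mp hα).lt_or_eq with h | rfl
      · exact hsg.trans (IH γ (Order.lt_succ _) α h)
      · exact hsg
    · rw [zStrat_limit R hlim]
      exact iInf₂_le α hα
  intro α β h
  rcases h.lt_or_eq with h | rfl
  · exact key β α h
  · exact le_rfl

theorem zStrat_stab (hR : IsProgression R) : ∃ α, zStrat R (Order.succ α) = zStrat R α := by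
  by_contra h
  push_neg at h
  have hs : StrictAnti (zStrat R) := by
    intro α β hab
    exact lt_of_le_of_lt (zStrat_antitone R hR (Order.succ_le_of_lt hab))
      (lt_of_le_of_ne (zStrat_antitone R hR (Order.le_succ α)) (h α))
  exact not_small_ordinal.{u} (small_of_injective hs.injective)

theorem zStrat_const (hR : IsProgression R) {α₀ : Ordinal.{u}} (h : zStrat R (Order.succ α₀) = zStrat R α₀) :
    ∀ β, α₀ ≤ β → zStrat R β = zStrat R α₀ := by
  intro β
  induction β using Ordinal.induction with
  | h β IH =>
  intro hle
  rcases hle.lt_or_eq with hlt | rfl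
  · rcases Ordinal.zero_or_succ_or_isSuccLimit β with rfl | ⟨γ, rfl⟩ | hlim
    · exact absurd hlt (not_lt_of_ge (zero_le (a := α₀)))
    · have hγ : α₀ ≤ γ := Order.lt_succ_iff.mp hlt
      rw [zStrat_succ, IH γ (Order.lt_succ _) hγ, ← zStrat_succ, h]
    · rw [zStrat_limit R hlim]
      apply le_antisymm
      · exact iInf₂_le α₀ hlt
      · refine le_iInf₂ fun δ hδ => ?_
        rcases le_total α₀ δ with h1 | h1
        · rw [IH δ hδ h1]
        · exact zStrat_antitone R hR h1
  · rfl

theorem lrfLat_attained (hR : IsProgression R) (x : A) :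
    ∃ γ, x ≤ zStrat R γ ∧ lrfLat R x = zStrat R γ := by
  by_cases hall : ∀ α, x ≤ zStrat R α
  · obtain ⟨α₀, h⟩ := zStrat_stab R hR
    refine ⟨α₀, hall α₀, le_antisymm (iInf₂_le α₀ (hall α₀)) (le_iInf₂ fun α hα => ?_)⟩
    rcases le_total α α₀ with h1 | h1
    · exact zStrat_antitone R hR h1
    · rw [zStrat_const R hR h α h1]
  · push_neg at hall
    have hT : {α : Ordinal.{u} | ¬ x ≤ zStrat R α}.Nonempty := hall
    set μ := sInf {α : Ordinal.{u} | ¬ x ≤ zStrat R α} with hμdef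
    have hμ : ¬ x ≤ zStrat R μ := csInf_mem hT
    have hlt : ∀ β < μ, x ≤ zStrat R β := by
      intro β hβ
      by_contra hc
      exact absurd (csInf_le' (show β ∈ {α : Ordinal.{u} | ¬ x ≤ zStrat R α} from hc)) hβ.not_ge
    rcases Ordinal.zero_or_succ_or_isSuccLimit μ with h0 | ⟨γ, hs⟩ | hlim
    · exact absurd (h0 ▸ (zStrat_zero R) ▸ le_top) hμ
    · have hγ : x ≤ zStrat R γ := hlt γ (hs ▸ Order.lt_succ γ)
      refine ⟨γ, hγ, le_antisymm (iInf₂_le γ hγ) (le_iInf₂ fun α hα => ?_)⟩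
      have hαγ : α ≤ γ := by
        by_contra hc
        push_neg at hc
        have : μ ≤ α := hs ▸ Order.succ_le_of_lt hc
        exact hμ (hα.trans (zStrat_antitone R hR this))
      exact zStrat_antitone R hR hαγ
    · exact absurd (by rw [zStrat_limit R hlim]; exact le_iInf₂ hlt) hμ

theorem rmono_le_zStrat (hR : IsProgression R) {f : A → A} (hf : RMonotone R f) :
    ∀ α : Ordinal.{u}, ∀ x, x ≤ zStrat R α → f x ≤ zStrat R α := by
  intro α
  induction α using Ordinal.induction with
  | h α IH =>
  intro x hx
  rcases Ordinal.zero_or_succ_or_isSuccLimit α with rfl | ⟨γ, rfl⟩ | hlim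
  · rw [zStrat_zero]; exact le_top
  · have hxz : R x (zStrat R γ) := by
      rw [zStrat_succ] at hx
      exact hR.1 x _ _ _ hx (hR.2 _) le_rfl
    have hxle : x ≤ zStrat R γ := hx.trans (zStrat_antitone R hR (Order.le_succ γ))
    have hfz : f (zStrat R γ) ≤ zStrat R γ := IH γ (Order.lt_succ γ) _ le_rfl
    obtain ⟨h1, h2⟩ := hf x (zStrat R γ) hxle hxz
    have hfR : R (f x) (zStrat R γ) := hR.1 (f x) (f x) _ _ le_rfl h2 hfz
    rw [zStrat_succ]
    exact le_sSup hfR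
  · rw [zStrat_limit R hlim] at hx ⊢
    exact le_iInf₂ fun β hβ => IH β hβ x (hx.trans (iInf₂_le β hβ))

end

theorem lrfLat_largest_RMonotone {A : Type u} [CompleteLattice A] (R : A → A → Prop)
    (hR : IsProgression R) :
    RMonotone R (lrfLat R) ∧
    ∀ f : A → A, RMonotone R f → ∀ x : A, f x ≤ lrfLat R x := by
  constructor
  · intro a b hab hRab
    obtain ⟨γ, hbγ, hbeq⟩ := lrfLat_attained R hR b
    constructor
    · exact le_iInf₂ fun α hα => iInf₂_le α (hab.trans hα)
    · have hRaz : R a (zStrat R γ) := hR.1 a a b _ le_rfl hRab hbγ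
      have ha : a ≤ zStrat R (Order.succ γ) := by
        rw [zStrat_succ]; exact le_sSup hRaz
      have hla : lrfLat R a ≤ zStrat R (Order.succ γ) := iInf₂_le (Order.succ γ) ha
      rw [hbeq]
      exact hR.1 _ _ _ _ hla (zStrat_succ_R R hR γ) le_rfl
  · intro f hf x
    exact le_iInf₂ fun α hα => rmono_le_zStrat R hR hf α x hα
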